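/- Fix real parameters 0 < α < 1, β > 0, r > 0 and δ ∈ ℝ with δ > α·r, and set δ̂ := β + (δ−r)/(α−1). Define G(t) := (1−α)·t/2 − δ̂/t and F(t) := G(t) + √(G(t)² + 2(r+β)) for t > 0. If δ̂ < 0 and δ − 2αδ + α²r + βα(1−α) > 0, then 2δ̂/(α−1) < 2(δ−αr)/(α(1−α)), F is strictly decreasing on (0, √(2δ̂/(α−1))), and F is strictly increasing on (√(2δ̂/(α−1)), √(2(δ−αr)/(α(1−α)))). -/

import Mathlib

/-- Fix real parameters 0 < α < 1, β > 0, r > 0 and δ ∈ ℝ with δ > α·r, and set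
δ̂ := β + (δ−r)/(α−1). Define G(t) := (1−α)·t/2 − δ̂/t and F(t) := G(t) + √(G(t)² + 2(r+β))
for t > 0. If δ̂ < 0 and δ − 2αδ + α²r + βα(1−α) > 0, then
2δ̂/(α−1) < 2(δ−αr)/(α(1−α)), F is strictly decreasing on (0, √(2δ̂/(α−1))), and F is
strictly increasing on (√(2δ̂/(α−1)), √(2(δ−αr)/(α(1−α)))). -/
theorem stmt_9 (α β r δ : ℝ) (hα0 : 0 < α) (hα1 : α < 1) (hβ : 0 < β) (hr : 0 < r)
    (hδ : α * r < δ)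
    (δhat : ℝ) (hδhat : δhat = β + (δ - r) / (α - 1))
    (G F : ℝ → ℝ)
    (hG : ∀ t, G t = (1 - α) * t / 2 - δhat / t)
    (hF : ∀ t, F t = G t + Real.sqrt ((G t) ^ 2 + 2 * (r + β)))
    (hneg : δhat < 0)
    (hcase : 0 < δ - 2 * α * δ + α ^ 2 * r + β * α * (1 - α)) :
    2 * δhat / (α - 1) < 2 * (δ - α * r) / (α * (1 - α)) ∧
    StrictAntiOn F (Set.Ioo 0 (Real.sqrt (2 * δhat / (α - 1)))) ∧
    StrictMonoOn F
      (Set.Ioo (Real.sqrt (2 * δhat / (α - 1)))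
        (Real.sqrt (2 * (δ - α * r) / (α * (1 - α))))) := by
  have h1α : (0:ℝ) < 1 - α := by linarith
  have hne : α - 1 ≠ 0 := by intro h; linarith
  set A := 2 * δhat / (α - 1) with hA
  have hApos : 0 < A := div_pos_of_neg_of_neg (by linarith) (by linarith)
  have hAα : A * (α - 1) = 2 * δhat := by rw [hA]; field_simp
  have hδr : δhat * (α - 1) = β * (α - 1) + (δ - r) := by rw [hδhat]; field_simp
  -- Part 1
  have h2 : δhat * (α - 1) * (2 * α) = (β * (α - 1) + (δ - r)) * (2 * α) := by rw [hδr]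
  have key : (-2 * δhat * α) * (1 - α) < (2 * (δ - α * r)) * (1 - α) := by nlinarith [h2, hcase]
  have key2 : -2 * δhat * α < 2 * (δ - α * r) := (mul_lt_mul_iff_of_pos_right h1α).mp key
  have hABl : A * (α * (1 - α)) = -2 * δhat * α := by rw [hA]; field_simp; ring
  have hABr : (2 * (δ - α * r) / (α * (1 - α))) * (α * (1 - α)) = 2 * (δ - α * r) :=
    div_mul_cancel₀ _ (by positivity)
  have hAB : A < 2 * (δ - α * r) / (α * (1 - α)) := by
    refine (mul_lt_mul_iff_of_pos_right (mul_pos hα0 h1α)).mp ?_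
    rw [hABl, hABr]; exact key2
  -- G is positive on (0, ∞)
  have hGpos : ∀ t : ℝ, 0 < t → 0 < G t := by
    intro t ht
    rw [hG]
    have h1 : 0 < (1 - α) * t / 2 := by positivity
    have h2 : δhat / t < 0 := div_neg_of_neg_of_pos hneg ht
    linarith
  -- F s < F t whenever 0 < s, 0 < t and G s < G t
  have hFG : ∀ s t : ℝ, 0 < s → G s < G t → F s < F t := by
    intro s t hs hGst
    rw [hF, hF]
    have hGs := hGpos s hs
    have hsq : (G s) ^ 2 + 2 * (r + β) ≤ (G t) ^ 2 + 2 * (r + β) := by nlinarith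
    have := Real.sqrt_le_sqrt hsq
    linarith
  have hGdiff : ∀ s t : ℝ, 0 < s → 0 < t →
      G t - G s = (t - s) * ((1 - α) / 2 + δhat / (s * t)) := by
    intro s t hs ht
    rw [hG, hG]
    field_simp
    ring
  have hsqA : Real.sqrt A * Real.sqrt A = A := Real.mul_self_sqrt hApos.le
  refine ⟨hAB, ?_, ?_⟩
  · intro s hs t ht hst
    obtain ⟨hs0, hsT⟩ := hs
    obtain ⟨ht0, htT⟩ := ht
    have hstA : s * t < A := by
      have := mul_lt_mul'' hsT htT hs0.le ht0.le
      linarith [hsqA]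
    have hstp : 0 < s * t := mul_pos hs0 ht0
    have h3 : (α - 1) * A < (α - 1) * (s * t) := mul_lt_mul_of_neg_left hstA (by linarith)
    have hM : (1 - α) / 2 + δhat / (s * t) < 0 := by
      have hd : δhat / (s * t) < (α - 1) / 2 := by
        rw [div_lt_iff₀ hstp]
        nlinarith [hAα, h3]
      linarith
    have hGts : G t < G s := by
      have hd := hGdiff s t hs0 ht0
      have := mul_neg_of_pos_of_neg (show (0:ℝ) < t - s by linarith) hM
      linarith
    exact hFG t s ht0 hGts
  · intro s hs t ht hst
    obtain ⟨hsT, hsB⟩ := hs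
    obtain ⟨htT, htB⟩ := ht
    have hs0 : 0 < s := lt_trans (Real.sqrt_pos.mpr hApos) hsT
    have ht0 : 0 < t := lt_trans (Real.sqrt_pos.mpr hApos) htT
    have hstA : A < s * t := by
      have := mul_lt_mul'' hsT htT (Real.sqrt_nonneg _) (Real.sqrt_nonneg _)
      linarith [hsqA]
    have hstp : 0 < s * t := mul_pos hs0 ht0
    have h3 : (α - 1) * (s * t) < (α - 1) * A := mul_lt_mul_of_neg_left hstA (by linarith)
    have hM : 0 < (1 - α) / 2 + δhat / (s * t) := by
      have hd : (α - 1) / 2 < δhat / (s * t) := by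
        rw [lt_div_iff₀ hstp]
        nlinarith [hAα, h3]
      linarith
    have hGst : G s < G t := by
      have hd := hGdiff s t hs0 ht0
      have := mul_pos (show (0:ℝ) < t - s by linarith) hM
      linarith
    exact hFG s t hs0 hGst
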